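/- Let κ > 0 and set Det(λ) = 2κ²λ^{−1/2}(1−cos√λ)(1+κ²/λ) − sin(√λ)(κ²/√λ+√λ)² for λ > 0. Then the limit as λ → 0⁺ of Det(λ)/√λ exists and equals κ²·(κ²/12 − 1). In particular this limit is zero if and only if κ² = 12. -/

import Mathlib

/-- The determinant `Det(λ)` of the 2×2 linear system obtained by imposing the
non-local boundary conditions on `a·sin(√λ x) + b·cos(√λ x)`. -/
noncomputable def Det (κ l : ℝ) : ℝ :=
  2 * κ ^ 2 / Real.sqrt l * (1 - Real.cos (Real.sqrt l)) * (1 + κ ^ 2 / l)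
    - Real.sin (Real.sqrt l) * (κ ^ 2 / Real.sqrt l + Real.sqrt l) ^ 2

open Filter Topology Real Set

lemma lim_sin : Tendsto (fun t : ℝ => Real.sin t / t) (𝓝[>] 0) (𝓝 1) := by
  have h := Real.hasDerivAt_sin 0
  rw [hasDerivAt_iff_tendsto_slope] at h
  have h2 := h.mono_left (nhdsWithin_mono _
    (fun x (hx : x ∈ Set.Ioi (0:ℝ)) => Set.mem_compl_singleton_iff.mpr (Set.mem_Ioi.1 hx).ne'))
  rw [Real.cos_zero] at h2
  refine h2.congr' ?_
  filter_upwards [self_mem_nhdsWithin] with t ht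
  simp [slope_def_field]

lemma lim_cos : Tendsto (fun t : ℝ => (1 - Real.cos t) / t ^ 2) (𝓝[>] 0) (𝓝 (1/2)) := by
  apply HasDerivAt.lhopital_zero_nhdsGT
    (f' := fun t => Real.sin t) (g' := fun t => 2 * t)
  · filter_upwards with x
    exact ((hasDerivAt_const x (1:ℝ)).sub (Real.hasDerivAt_cos x)).congr_deriv (by simp)
  · filter_upwards with x
    simpa [mul_comm] using hasDerivAt_pow 2 x
  · filter_upwards [self_mem_nhdsWithin] with x hx
    simp only [Set.mem_Ioi] at hx
    positivity
  · have hc : Continuous (fun t : ℝ => 1 - Real.cos t) := by continuity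
    have : Tendsto (fun t : ℝ => 1 - Real.cos t) (𝓝 0) (𝓝 0) := by
      simpa using hc.tendsto 0
    exact this.mono_left nhdsWithin_le_nhds
  · have : Tendsto (fun t : ℝ => t ^ 2) (𝓝 (0:ℝ)) (𝓝 0) := by
      simpa using (continuous_pow 2).tendsto (0:ℝ)
    exact this.mono_left nhdsWithin_le_nhds
  · have := lim_sin.div_const 2
    refine this.congr' ?_
    filter_upwards [self_mem_nhdsWithin] with t ht
    rw [div_div, mul_comm]

lemma lim4 : Tendsto (fun t : ℝ => (2 * (1 - Real.cos t) - t * Real.sin t) / t ^ 4)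
    (𝓝[>] 0) (𝓝 (1/12)) := by
  apply HasDerivAt.lhopital_zero_nhdsGT
    (f' := fun t => Real.sin t - t * Real.cos t) (g' := fun t => 4 * t ^ 3)
  · filter_upwards with x
    have h := (((hasDerivAt_const x (1:ℝ)).sub (Real.hasDerivAt_cos x)).const_mul 2).sub
      ((hasDerivAt_id x).mul (Real.hasDerivAt_sin x))
    refine h.congr_deriv ?_
    simp only [id_eq]
    ring
  · filter_upwards with x
    exact hasDerivAt_pow 4 x
  · filter_upwards [self_mem_nhdsWithin] with x hx
    simp only [Set.mem_Ioi] at hx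
    positivity
  · have : Tendsto (fun t : ℝ => 2 * (1 - Real.cos t) - t * Real.sin t) (𝓝 0) (𝓝 0) := by
      have hc : Continuous (fun t : ℝ => 2 * (1 - Real.cos t) - t * Real.sin t) := by continuity
      simpa using hc.tendsto 0
    exact this.mono_left nhdsWithin_le_nhds
  · have : Tendsto (fun t : ℝ => t ^ 4) (𝓝 (0:ℝ)) (𝓝 0) := by
      simpa using (continuous_pow 4).tendsto (0:ℝ)
    exact this.mono_left nhdsWithin_le_nhds
  · -- second application of L'Hôpital
    apply HasDerivAt.lhopital_zero_nhdsGT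
      (f' := fun t => t * Real.sin t) (g' := fun t => 12 * t ^ 2)
    · filter_upwards with x
      have h := (Real.hasDerivAt_sin x).sub ((hasDerivAt_id x).mul (Real.hasDerivAt_cos x))
      refine h.congr_deriv ?_
      simp only [id_eq]
      ring
    · filter_upwards with x
      have h := (hasDerivAt_pow 3 x).const_mul (4:ℝ)
      refine h.congr_deriv ?_
      ring
    · filter_upwards [self_mem_nhdsWithin] with x hx
      simp only [Set.mem_Ioi] at hx
      positivity
    · have : Tendsto (fun t : ℝ => Real.sin t - t * Real.cos t) (𝓝 0) (𝓝 0) := by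
        have hc : Continuous (fun t : ℝ => Real.sin t - t * Real.cos t) := by continuity
        simpa using hc.tendsto 0
      exact this.mono_left nhdsWithin_le_nhds
    · have : Tendsto (fun t : ℝ => 4 * t ^ 3) (𝓝 (0:ℝ)) (𝓝 0) := by
        have hc : Continuous (fun t : ℝ => 4 * t ^ 3) := by continuity
        simpa using hc.tendsto 0
      exact this.mono_left nhdsWithin_le_nhds
    · have := lim_sin.div_const 12
      refine this.congr' ?_
      filter_upwards [self_mem_nhdsWithin] with t ht
      simp only [Set.mem_Ioi] at ht
      have h0 : (t:ℝ) ≠ 0 := ne_of_gt ht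
      field_simp

/-- **Behavior of the determinant at the origin.**
`Det(λ)/√λ → κ²(κ²/12 - 1)` as `λ → 0⁺`; this limit is zero iff `κ² = 12`. -/
theorem det_limit_at_zero (κ : ℝ) (hκ : 0 < κ) :
    Tendsto (fun l => Det κ l / Real.sqrt l) (𝓝[>] (0:ℝ))
      (𝓝 (κ ^ 2 * (κ ^ 2 / 12 - 1))) ∧
    (κ ^ 2 * (κ ^ 2 / 12 - 1) = 0 ↔ κ ^ 2 = 12) := by
  constructor
  · -- the limit
    set F : ℝ → ℝ := fun t =>
      2 * κ ^ 2 * ((1 - Real.cos t) / t ^ 2)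
        + κ ^ 4 * ((2 * (1 - Real.cos t) - t * Real.sin t) / t ^ 4)
        - 2 * κ ^ 2 * (Real.sin t / t) - t * Real.sin t with hF
    have hFlim : Tendsto F (𝓝[>] 0) (𝓝 (κ ^ 2 * (κ ^ 2 / 12 - 1))) := by
      have hts : Tendsto (fun t : ℝ => t * Real.sin t) (𝓝[>] (0:ℝ)) (𝓝 0) := by
        have hc : Continuous (fun t : ℝ => t * Real.sin t) := by continuity
        have := hc.tendsto 0
        simp only [Real.sin_zero, mul_zero] at this
        exact this.mono_left nhdsWithin_le_nhds
      have h := (((lim_cos.const_mul (2 * κ ^ 2)).add (lim4.const_mul (κ ^ 4))).sub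
        (lim_sin.const_mul (2 * κ ^ 2))).sub hts
      convert h using 1
      ring
    have hsq : Tendsto Real.sqrt (𝓝[>] (0:ℝ)) (𝓝[>] (0:ℝ)) := by
      apply tendsto_nhdsWithin_of_tendsto_nhds_of_eventually_within
      · exact (Real.continuous_sqrt.tendsto' 0 0 Real.sqrt_zero).mono_left nhdsWithin_le_nhds
      · filter_upwards [self_mem_nhdsWithin] with x hx
        exact Real.sqrt_pos.mpr hx
    refine (hFlim.comp hsq).congr' ?_
    filter_upwards [self_mem_nhdsWithin] with l hl
    have ht : 0 < Real.sqrt l := Real.sqrt_pos.mpr hl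
    have ht' : Real.sqrt l ≠ 0 := ne_of_gt ht
    have hl2 : Real.sqrt l ^ 2 = l := Real.sq_sqrt hl.le
    simp only [Function.comp, Det, hF]
    rw [← hl2]
    field_simp
    rw [Real.sqrt_sq ht.le]
    ring
  · have h2 : κ ^ 2 ≠ 0 := pow_ne_zero 2 hκ.ne'
    constructor
    · intro h
      rcases mul_eq_zero.1 h with h' | h'
      · exact absurd h' h2
      · linarith
    · intro h
      rw [h]
      norm_num
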